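/- The latent Schatten 1-norm satisfies ‖W‖_{S1/1,latent} ≤ (min_k √r_k) · ‖W‖_F, where r_k is the mode-k rank of W. -/

import Mathlib

open scoped BigOperators

namespace TensorPaper

noncomputable def singularValues {m p : Type*} [Fintype m] [Fintype p] [DecidableEq m]
    (A : Matrix m p ℝ) : m → ℝ :=
  fun i => Real.sqrt ((Matrix.isHermitian_mul_conjTranspose_self A).eigenvalues i)

noncomputable def nuclearNorm {m p : Type*} [Fintype m] [Fintype p] [DecidableEq m]
    (A : Matrix m p ℝ) : ℝ := ∑ i, singularValues A i

noncomputable def spectralNorm {m p : Type*} [Fintype m] [Fintype p] [DecidableEq m]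
    (A : Matrix m p ℝ) : ℝ := ⨆ i, singularValues A i

noncomputable def frobM {m p : Type*} [Fintype m] [Fintype p]
    (A : Matrix m p ℝ) : ℝ := Real.sqrt (∑ i, ∑ j, A i j ^ 2)

variable {K : ℕ}

abbrev Tensor (n : Fin K → ℕ) : Type := (∀ j, Fin (n j)) → ℝ

noncomputable def unfoldT (n : Fin K → ℕ) (k : Fin K) (W : Tensor n) :
    Matrix (Fin (n k)) (∀ j : {j : Fin K // j ≠ k}, Fin (n j.1)) ℝ :=
  fun i rest => W (fun j => if h : j = k then Fin.cast (congrArg n h.symm) i else rest ⟨j, h⟩)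

noncomputable def frobT (n : Fin K → ℕ) (W : Tensor n) : ℝ :=
  Real.sqrt (∑ x, W x ^ 2)

noncomputable def tdot (n : Fin K → ℕ) (W X : Tensor n) : ℝ := ∑ x, W x * X x

noncomputable def latentNorm (n : Fin K → ℕ) (W : Tensor n) : ℝ :=
  sInf {s | ∃ Ws : Fin K → Tensor n,
    (∑ k, Ws k) = W ∧ s = ∑ k, nuclearNorm (unfoldT n k (Ws k))}

noncomputable def overlapSup (n : Fin K → ℕ) (X : Tensor n) : ℝ :=
  ⨆ k, spectralNorm (unfoldT n k X)

section Aux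

open Matrix

variable {m p : Type*} [Fintype m] [Fintype p] [DecidableEq m]

lemma sv_nonneg (A : Matrix m p ℝ) (i : m) : 0 ≤ singularValues A i := Real.sqrt_nonneg _

lemma nuclearNorm_nonneg (A : Matrix m p ℝ) : 0 ≤ nuclearNorm A :=
  Finset.sum_nonneg fun i _ => sv_nonneg A i

lemma sum_sq_sv (A : Matrix m p ℝ) : ∑ i, singularValues A i ^ 2 = ∑ i, ∑ j, A i j ^ 2 := by
  have hA := Matrix.isHermitian_mul_conjTranspose_self A
  have h1 : ∀ i, singularValues A i ^ 2 = hA.eigenvalues i := fun i =>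
    Real.sq_sqrt ((Matrix.posSemidef_self_mul_conjTranspose A).eigenvalues_nonneg i)
  have htr : (A * Aᴴ).trace = ∑ i, hA.eigenvalues i := by
    conv_lhs => rw [hA.spectral_theorem]
    rw [Unitary.conjStarAlgAut_apply, Matrix.trace_mul_cycle]
    rw [show (star (hA.eigenvectorUnitary : Matrix m m ℝ)) * (hA.eigenvectorUnitary : Matrix m m ℝ) = 1 from Unitary.coe_star_mul_self _]
    simp [Matrix.trace, Matrix.diag]
  calc ∑ i, singularValues A i ^ 2 = ∑ i, hA.eigenvalues i := by simp [h1]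
    _ = (A * Aᴴ).trace := htr.symm
    _ = ∑ i, ∑ j, A i j ^ 2 := by
        simp [Matrix.trace, Matrix.diag, Matrix.mul_apply, sq]

lemma nuclearNorm_le (A : Matrix m p ℝ) :
    nuclearNorm A ≤ Real.sqrt (A.rank : ℝ) * frobM A := by
  classical
  have hA := Matrix.isHermitian_mul_conjTranspose_self A
  set s : Finset m := Finset.univ.filter (fun i => hA.eigenvalues i ≠ 0) with hs
  have hcard : (s.card : ℝ) ≤ (A.rank : ℝ) := by
    have h1 : (A * Aᴴ).rank = A.rank := Matrix.rank_self_mul_conjTranspose A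
    have h2 : (A * Aᴴ).rank = Fintype.card {i // hA.eigenvalues i ≠ 0} :=
      hA.rank_eq_card_non_zero_eigs
    have h3 : Fintype.card {i // hA.eigenvalues i ≠ 0} = s.card := by
      simp [hs, Fintype.card_subtype]
    exact_mod_cast le_of_eq (by rw [← h3, ← h2, h1])
  have hsum : nuclearNorm A = ∑ i ∈ s, singularValues A i := by
    rw [nuclearNorm]
    refine (Finset.sum_subset (Finset.subset_univ s) ?_).symm
    intro i _ hi
    simp only [hs, Finset.mem_filter, Finset.mem_univ, true_and, not_not] at hi
    simp only [singularValues]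
    convert Real.sqrt_zero using 2
  have hCS : (∑ i ∈ s, singularValues A i) ^ 2 ≤ (s.card : ℝ) * ∑ i ∈ s, singularValues A i ^ 2 :=
    sq_sum_le_card_mul_sum_sq
  have hle2 : ∑ i ∈ s, singularValues A i ^ 2 ≤ ∑ i, ∑ j, A i j ^ 2 := by
    rw [← sum_sq_sv A]
    exact Finset.sum_le_sum_of_subset_of_nonneg (Finset.subset_univ s)
      (fun i _ _ => sq_nonneg _)
  have hnn : 0 ≤ nuclearNorm A := nuclearNorm_nonneg A
  have hsq : nuclearNorm A ^ 2 ≤ (A.rank : ℝ) * (∑ i, ∑ j, A i j ^ 2) := by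
    rw [hsum]
    calc (∑ i ∈ s, singularValues A i) ^ 2
        ≤ (s.card : ℝ) * ∑ i ∈ s, singularValues A i ^ 2 := hCS
      _ ≤ (A.rank : ℝ) * (∑ i, ∑ j, A i j ^ 2) := by
          apply mul_le_mul hcard hle2 (Finset.sum_nonneg fun i _ => sq_nonneg _)
            (Nat.cast_nonneg _)
  have := Real.sqrt_le_sqrt hsq
  rwa [Real.sqrt_sq hnn, Real.sqrt_mul (Nat.cast_nonneg _)] at this

omit [DecidableEq m] in
lemma frobM_zero : frobM (0 : Matrix m p ℝ) = 0 := by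
  simp [frobM]

lemma nuclearNorm_zero : nuclearNorm (0 : Matrix m p ℝ) = 0 := by
  have h := nuclearNorm_le (0 : Matrix m p ℝ)
  rw [frobM_zero, mul_zero] at h
  exact le_antisymm h (nuclearNorm_nonneg _)

end Aux

lemma frobM_unfold (n : Fin K → ℕ) (k : Fin K) (W : Tensor n) :
    frobM (unfoldT n k W) = frobT n W := by
  classical
  unfold frobM frobT
  congr 1
  rw [← Fintype.sum_prod_type']
  refine (Fintype.sum_equiv (Equiv.piSplitAt k (fun j => Fin (n j)))
    (fun x => W x ^ 2) (fun p => unfoldT n k W p.1 p.2 ^ 2) ?_).symm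
  intro x
  congr 1
  simp only [unfoldT]
  congr 1
  funext j
  by_cases h : j = k
  · subst h
    simp [Equiv.piSplitAt, Fin.cast]
  · simp [Equiv.piSplitAt, h]

lemma unfold_zero (n : Fin K → ℕ) (j : Fin K) :
    unfoldT n j (0 : Tensor n) = 0 := by
  funext i rest
  rfl

theorem latentNorm_le_min_sqrt_rank_mul_frobenius
    {K : ℕ} (hK : 0 < K) (n : Fin K → ℕ) (W : Tensor n) :
    haveI : Nonempty (Fin K) := ⟨⟨0, hK⟩⟩
    latentNorm n W ≤ (⨅ k, Real.sqrt ((unfoldT n k W).rank : ℝ)) * frobT n W := by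
  classical
  haveI : Nonempty (Fin K) := ⟨⟨0, hK⟩⟩
  show latentNorm n W ≤ (⨅ k, Real.sqrt ((unfoldT n k W).rank : ℝ)) * frobT n W
  obtain ⟨k0, hk0⟩ := exists_eq_ciInf_of_finite
    (f := fun k => Real.sqrt (((unfoldT n k W).rank : ℝ)))
  rw [← hk0]
  have hmem : nuclearNorm (unfoldT n k0 W) ∈ {s | ∃ Ws : Fin K → Tensor n,
      (∑ k, Ws k) = W ∧ s = ∑ k, nuclearNorm (unfoldT n k (Ws k))} := by
    refine ⟨fun j => if j = k0 then W else 0, ?_, ?_⟩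
    · simp
    · rw [Finset.sum_eq_single k0]
      · simp
      · intro j _ hj
        simp [hj, unfold_zero, nuclearNorm_zero]
      · intro h; exact absurd (Finset.mem_univ k0) h
  have hbdd : BddBelow {s | ∃ Ws : Fin K → Tensor n,
      (∑ k, Ws k) = W ∧ s = ∑ k, nuclearNorm (unfoldT n k (Ws k))} := by
    refine ⟨0, ?_⟩
    rintro s ⟨Ws, -, rfl⟩
    exact Finset.sum_nonneg fun k _ => nuclearNorm_nonneg _
  calc latentNorm n W ≤ nuclearNorm (unfoldT n k0 W) := csInf_le hbdd hmem
    _ ≤ Real.sqrt (((unfoldT n k0 W).rank : ℝ)) * frobM (unfoldT n k0 W) :=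
        nuclearNorm_le _
    _ = Real.sqrt (((unfoldT n k0 W).rank : ℝ)) * frobT n W := by
        rw [frobM_unfold]

end TensorPaper
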